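/- Let B ⊆ A be a unital inclusion of unital complex algebras and X a B-B-subbimodule of A. Given two families of B-B-bimodule maps {φ_n : X^{⊗_B n} → B}_{n≥1} and {κ_n : X^{⊗_B n} → B}_{n≥1}, with multiplicative extensions {φ_π} and {κ_π} (π ∈ NC(n)), the following conditions are equivalent: (1) φ_n = ∑_{π ∈ NC(n)} κ_π for each n; (2) κ_n = ∑_{π ∈ NC(n)} μ(π, 1_n) φ_π for each n; (3) φ_τ = ∑_{π ∈ NC(n), π ≤ τ} κ_π for each n and each τ ∈ NC(n); (4) κ_τ = ∑_{π ∈ NC(n), π ≤ τ} μ(π, τ) φ_π for each n and each τ ∈ NC(n). -/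

import Mathlib

noncomputable section
open scoped Classical

/-- `r` encodes a noncrossing partition of `Fin n`, as a Boolean-valued equivalence
relation whose blocks are noncrossing. -/
def IsNCPart (n : ℕ) (r : Fin n → Fin n → Bool) : Prop :=
  (∀ i, r i i) ∧ (∀ i j, r i j → r j i) ∧ (∀ i j k, r i j → r j k → r i k) ∧
  (∀ i k j l : Fin n, i < k → k < j → j < l → r i j → r k l → r i k)

/-- refinement order on partitions: `r ≤ s` iff `r` refines `s` -/
def relLe {n : ℕ} (r s : Fin n → Fin n → Bool) : Prop := ∀ i j, r i j → s i j

/-- the maximal partition `1ₙ`, with a single block -/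
def relTop (n : ℕ) : Fin n → Fin n → Bool := fun _ _ => true

/-- the 0-based interval `{k, …, l-1}` (the 1-based interval `[k+1, l]` of the paper)
is a block of `r` -/
def IsIntervalBlock {n : ℕ} (r : Fin n → Fin n → Bool) (k l : ℕ) : Prop :=
  k < l ∧ l ≤ n ∧
    ∀ i j : Fin n, k ≤ i.val → i.val < l → (r i j ↔ (k ≤ j.val ∧ j.val < l))

/-- the order embedding of `Fin (n - (l - k))` into `Fin n` skipping the interval
`{k, …, l-1}` -/
def skipEmb {n : ℕ} (k l : ℕ) (j : Fin (n - (l - k))) : Fin n :=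
  if h : j.val < k then ⟨j.val, by have := j.isLt; omega⟩
  else ⟨j.val + (l - k), by have := j.isLt; omega⟩

/-- the partition induced by `r` on the complement of the interval `{k, …, l-1}` -/
def relRestr {n : ℕ} (r : Fin n → Fin n → Bool) (k l : ℕ) :
    Fin (n - (l - k)) → Fin (n - (l - k)) → Bool :=
  fun i j => r (skipEmb k l i) (skipEmb k l j)

/-- splicing a tuple: delete the entries in positions `{k, …, l-1}` and multiply the
entry in position `k-1` on the right by `b` -/
def splice {A : Type} [Ring A] {n : ℕ} (x : Fin n → A) (k l : ℕ) (b : A) :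
    Fin (n - (l - k)) → A := fun j =>
  if j.val + 1 < k then x ⟨j.val, by have := j.isLt; omega⟩
  else if j.val + 1 = k then x ⟨j.val, by have := j.isLt; omega⟩ * b
  else x ⟨j.val + (l - k), by have := j.isLt; omega⟩

section
variable {A : Type} [Ring A] [Algebra ℂ A] (B : Subalgebra ℂ A)

/-- `f` is an (additive, `ℂ`-homogeneous, `B`-balanced) `B`-`B`-bimodule map in the sense
relevant for operator-valued cumulants -/
def IsBimodMap {n : ℕ} (f : (Fin n → A) → A) : Prop :=
  (∀ (x : Fin n → A) (i : Fin n) (a b : A),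
    f (Function.update x i (a + b)) = f (Function.update x i a) + f (Function.update x i b)) ∧
  (∀ (x : Fin n → A) (i : Fin n) (c : ℂ) (a : A),
    f (Function.update x i (c • a)) = c • f (Function.update x i a)) ∧
  (∀ (hn : 0 < n) (x : Fin n → A) (b : A), b ∈ B →
    f (Function.update x ⟨0, hn⟩ (b * x ⟨0, hn⟩)) = b * f x) ∧
  (∀ (hn : 0 < n) (x : Fin n → A) (b : A), b ∈ B →
    f (Function.update x ⟨n - 1, by omega⟩ (x ⟨n - 1, by omega⟩ * b)) = f x * b) ∧
  (∀ (x : Fin n → A) (i : Fin n) (hi : i.val + 1 < n) (b : A), b ∈ B →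
    f (Function.update x i (x i * b)) =
      f (Function.update x ⟨i.val + 1, hi⟩ (b * x ⟨i.val + 1, hi⟩)))

/-- `Phi` is the multiplicative extension of the family `phi` over noncrossing
partitions: it agrees with `phi` on the maximal partitions `1ₙ` and satisfies the
defining recursion for every decomposition `π = ρ ∪ 1_{[k+1,l]}` by an interval block. -/
def IsMultExt (phi : ∀ n : ℕ, (Fin n → A) → A)
    (Phi : ∀ n : ℕ, (Fin n → Fin n → Bool) → (Fin n → A) → A) : Prop :=
  (∀ (n : ℕ) (x : Fin n → A), Phi n (relTop n) x = phi n x) ∧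
  (∀ (n : ℕ) (r : Fin n → Fin n → Bool), IsNCPart n r →
    ∀ (k l : ℕ), 1 ≤ k → (hint : IsIntervalBlock r k l) →
    ∀ x : Fin n → A,
      Phi n r x = Phi (n - (l - k)) (relRestr r k l)
        (splice x k l (phi (l - k)
          (fun j => x ⟨k + j.val, by have := j.isLt; have := hint.2.1; omega⟩))))

end


section NCX
variable {n : ℕ} {r s t : Fin n → Fin n → Bool}

lemma isNCPart_relTop : IsNCPart n (relTop n) :=
  ⟨fun _ => rfl, fun _ _ _ => rfl, fun _ _ _ _ _ => rfl, fun _ _ _ _ _ _ _ _ _ => rfl⟩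

lemma relLe_top (r : Fin n → Fin n → Bool) : relLe r (relTop n) := fun _ _ _ => rfl

lemma relLe_refl (r : Fin n → Fin n → Bool) : relLe r r := fun _ _ h => h

lemma relLe_trans (h1 : relLe r s) (h2 : relLe s t) : relLe r t :=
  fun i j h => h2 i j (h1 i j h)

lemma relLe_antisymm (h1 : relLe r s) (h2 : relLe s r) : r = s := by
  funext i j
  rw [Bool.eq_iff_iff]
  exact ⟨h1 i j, h2 i j⟩

lemma eq_relTop_of_dim0 (r : Fin 0 → Fin 0 → Bool) : r = relTop 0 := by
  funext i; exact i.elim0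

lemma eq_relTop_of_intervalBlock (hr : IsNCPart n r) (h : IsIntervalBlock r 0 n) :
    r = relTop n := by
  funext i j
  have := (h.2.2 i j (Nat.zero_le _) i.isLt).mpr ⟨Nat.zero_le _, j.isLt⟩
  simp [relTop, this]

lemma exists_intervalBlock (hr : IsNCPart n r) (S : Finset (Fin n)) (hS : S.Nonempty)
    (hclosed : ∀ i ∈ S, ∀ j, r i j → j ∈ S)
    (hconv : ∀ i j m : Fin n, i ∈ S → m ∈ S → i ≤ j → j ≤ m → j ∈ S) :
    ∃ k l : ℕ, IsIntervalBlock r k l ∧ ∀ j : Fin n, k ≤ j.val → j.val < l → j ∈ S := by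
  obtain ⟨hrefl, hsymm, htrans, hcross⟩ := hr
  have hblk : ∀ i : Fin n, (Finset.univ.filter (fun j => r i j)).Nonempty :=
    fun i => ⟨i, by simp [hrefl i]⟩
  set lo : Fin n → Fin n := fun i => (Finset.univ.filter (fun j => r i j)).min' (hblk i) with hlo
  set hi : Fin n → Fin n := fun i => (Finset.univ.filter (fun j => r i j)).max' (hblk i) with hhi
  have hrlo : ∀ i, r i (lo i) := fun i => by
    have := Finset.min'_mem _ (hblk i); simpa using this
  have hrhi : ∀ i, r i (hi i) := fun i => by
    have := Finset.max'_mem _ (hblk i); simpa using this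
  have hlole : ∀ i j, r i j → lo i ≤ j := fun i j h =>
    Finset.min'_le _ _ (by simpa using h)
  have hhile : ∀ i j, r i j → j ≤ hi i := fun i j h =>
    Finset.le_max' _ _ (by simpa using h)
  obtain ⟨i0, hi0S, hmin⟩ := S.exists_min_image (fun i => (hi i).val - (lo i).val) hS
  have hloS : lo i0 ∈ S := hclosed i0 hi0S _ (hrlo i0)
  have hhiS : hi i0 ∈ S := hclosed i0 hi0S _ (hrhi i0)
  -- key claim: the block of i0 is the whole interval [lo i0, hi i0]
  have key : ∀ j : Fin n, (lo i0).val ≤ j.val → j.val ≤ (hi i0).val → r i0 j := by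
    intro j hj1 hj2
    by_contra hnr
    have hj1' : (lo i0).val < j.val := by
      rcases Nat.lt_or_ge (lo i0).val j.val with h | h
      · exact h
      · exact absurd (by rw [show j = lo i0 from Fin.ext (le_antisymm (by omega) hj1)]; exact hrlo i0) hnr
    have hj2' : j.val < (hi i0).val := by
      rcases Nat.lt_or_ge j.val (hi i0).val with h | h
      · exact h
      · exact absurd (by rw [show j = hi i0 from Fin.ext (le_antisymm hj2 h)]; exact hrhi i0) hnr
    have hlohi : r (lo i0) (hi i0) := htrans _ _ _ (hsymm _ _ (hrlo i0)) (hrhi i0)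
    -- every element related to j lies strictly between lo i0 and hi i0
    have hgap : ∀ j' : Fin n, r j j' → (lo i0).val < j'.val ∧ j'.val < (hi i0).val := by
      intro j' hjj'
      constructor
      · by_contra hle
        push_neg at hle
        rcases Nat.lt_or_ge j'.val (lo i0).val with h | h
        · -- j' < lo i0 < j < hi i0, r j' j, r (lo i0) (hi i0)
          have hc := hcross j' (lo i0) j (hi i0) (by exact h) (by exact hj1') (by exact hj2')
            (hsymm _ _ hjj') hlohi
          exact hnr (htrans _ _ _ (hrlo i0) (htrans _ _ _ (hsymm _ _ hc) (hsymm _ _ hjj')))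
        · have : j' = lo i0 := Fin.ext (le_antisymm hle h)
          subst this
          exact hnr (htrans _ _ _ (hrlo i0) (hsymm _ _ hjj'))
      · by_contra hle
        push_neg at hle
        rcases Nat.lt_or_ge (hi i0).val j'.val with h | h
        · -- lo i0 < j < hi i0 < j', r (lo i0) (hi i0), r j j'
          have hc := hcross (lo i0) j (hi i0) j' (by exact hj1') (by exact hj2') (by exact h)
            hlohi hjj'
          exact hnr (htrans _ _ _ (hrlo i0) hc)
        · have : j' = hi i0 := Fin.ext (le_antisymm h hle)
          subst this
          exact hnr (htrans _ _ _ (hrhi i0) (hsymm _ _ hjj'))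
    have hjS : j ∈ S := hconv (lo i0) j (hi i0) hloS hhiS (by exact le_of_lt hj1') (by exact le_of_lt hj2')
    have h1 := (hgap (lo j) (hrlo j)).1
    have h2 := (hgap (hi j) (hrhi j)).2
    have h3 : (lo j).val ≤ (hi j).val := by
      have := hhile j (lo j) (hrlo j); exact this
    have := hmin j hjS
    try simp only at this
    omega
  have hkl : (lo i0).val ≤ (hi i0).val := hhile i0 (lo i0) (hrlo i0)
  refine ⟨(lo i0).val, (hi i0).val + 1, ⟨by omega, by have := (hi i0).isLt; omega, ?_⟩, ?_⟩
  · intro i j hik hil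
    have hri : r i0 i := key i hik (by omega)
    constructor
    · intro hij
      have h4 : r i0 j := htrans _ _ _ hri hij
      have h5 : lo i0 ≤ j := hlole i0 j h4
      have h6 : j ≤ hi i0 := hhile i0 j h4
      exact ⟨h5, by have : j.val ≤ (hi i0).val := h6; omega⟩
    · rintro ⟨hj1, hj2⟩
      exact htrans _ _ _ (hsymm _ _ hri) (key j hj1 (by omega))
  · intro j hj1 hj2
    exact hconv (lo i0) j (hi i0) hloS hhiS hj1 (by omega)
end NCX

section NCX2
variable {n : ℕ} {r : Fin n → Fin n → Bool}

lemma exists_intervalBlock_pos (hr : IsNCPart n r) (hn : 1 ≤ n) (hne : r ≠ relTop n) :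
    ∃ k l : ℕ, 1 ≤ k ∧ IsIntervalBlock r k l := by
  obtain ⟨k, l, hIB, -⟩ := exists_intervalBlock hr Finset.univ
    ⟨⟨0, hn⟩, Finset.mem_univ _⟩ (fun _ _ _ _ => Finset.mem_univ _)
    (fun _ _ _ _ _ _ _ => Finset.mem_univ _)
  rcases Nat.lt_or_ge k 1 with hk | hk
  · -- k = 0
    have hk0 : k = 0 := by omega
    subst hk0
    have hln : l < n := by
      rcases Nat.lt_or_ge l n with h | h
      · exact h
      · exact absurd (eq_relTop_of_intervalBlock hr (by
          have : l = n := le_antisymm hIB.2.1 h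
          rwa [this] at hIB)) hne
    obtain ⟨hrefl, hsymm, htrans, hcross⟩ := hr
    have hSne : (Finset.univ.filter (fun j : Fin n => l ≤ j.val)).Nonempty :=
      ⟨⟨l, hln⟩, by simp⟩
    have hcl : ∀ i ∈ Finset.univ.filter (fun j : Fin n => l ≤ j.val), ∀ j, r i j →
        j ∈ Finset.univ.filter (fun j : Fin n => l ≤ j.val) := by
      intro i hiS j hij
      simp at hiS ⊢
      by_contra hjl
      push_neg at hjl
      have := (hIB.2.2 j i (Nat.zero_le _) hjl).mp (hsymm _ _ hij)
      omega
    have hcv : ∀ i j m : Fin n, i ∈ Finset.univ.filter (fun j : Fin n => l ≤ j.val) →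
        m ∈ Finset.univ.filter (fun j : Fin n => l ≤ j.val) → i ≤ j → j ≤ m →
        j ∈ Finset.univ.filter (fun j : Fin n => l ≤ j.val) := by
      intro i j m hiS hmS h1 h2
      simp at hiS ⊢
      have : i.val ≤ j.val := h1
      omega
    obtain ⟨k', l', hIB', hmem⟩ := exists_intervalBlock ⟨hrefl, hsymm, htrans, hcross⟩
      (Finset.univ.filter (fun j : Fin n => l ≤ j.val)) hSne hcl hcv
    refine ⟨k', l', ?_, hIB'⟩
    have : (⟨k', by have := hIB'.1; have := hIB'.2.1; omega⟩ : Fin n) ∈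
        Finset.univ.filter (fun j : Fin n => l ≤ j.val) :=
      hmem _ (le_refl _) hIB'.1
    simp at this
    have := hIB.1; omega
  · exact ⟨k, l, hk, hIB⟩

lemma skipEmb_val (k l : ℕ) (j : Fin (n - (l - k))) :
    (skipEmb k l j).val = if j.val < k then j.val else j.val + (l - k) := by
  unfold skipEmb
  split <;> rfl

lemma skipEmb_lt {k l : ℕ} {i j : Fin (n - (l - k))} (h : i < j) :
    skipEmb k l i < skipEmb k l j := by
  have h1 := skipEmb_val k l i
  have h2 := skipEmb_val k l j
  have : i.val < j.val := h
  show (skipEmb k l i).val < (skipEmb k l j).val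
  rw [h1, h2]
  split <;> split <;> omega

lemma skipEmb_not_mem {k l : ℕ} (hk : k ≤ l) (j : Fin (n - (l - k))) :
    (skipEmb k l j).val < k ∨ l ≤ (skipEmb k l j).val := by
  rw [skipEmb_val]
  split <;> omega

lemma isNCPart_relRestr (hr : IsNCPart n r) (k l : ℕ) :
    IsNCPart (n - (l - k)) (relRestr r k l) := by
  obtain ⟨hrefl, hsymm, htrans, hcross⟩ := hr
  refine ⟨fun i => hrefl _, fun i j h => hsymm _ _ h,
    fun i j m h1 h2 => htrans _ _ _ h1 h2, ?_⟩
  intro i k0 j l0 h1 h2 h3 hij hkl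
  exact hcross _ _ _ _ (skipEmb_lt h1) (skipEmb_lt h2) (skipEmb_lt h3) hij hkl

end NCX2

section NCX3
variable {n : ℕ}

/-- projection of a complement element to `Fin (n - (l - k))` -/
def toCompl (k l : ℕ) (hk : 1 ≤ k) (hkl : k < l) (hl : l ≤ n) (i : Fin n) :
    Fin (n - (l - k)) :=
  if h : i.val < k then ⟨i.val, by omega⟩
  else ⟨i.val - (l - k), by have := i.isLt; omega⟩

lemma toCompl_val (k l : ℕ) (hk : 1 ≤ k) (hkl : k < l) (hl : l ≤ n) (i : Fin n) :
    (toCompl k l hk hkl hl i).val = if i.val < k then i.val else i.val - (l - k) := by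
  unfold toCompl; split <;> rfl

lemma toCompl_skipEmb (k l : ℕ) (hk : 1 ≤ k) (hkl : k < l) (hl : l ≤ n)
    (j : Fin (n - (l - k))) : toCompl k l hk hkl hl (skipEmb k l j) = j := by
  apply Fin.ext
  rw [toCompl_val, skipEmb_val]
  have := j.isLt
  split_ifs <;> omega

lemma skipEmb_toCompl (k l : ℕ) (hk : 1 ≤ k) (hkl : k < l) (hl : l ≤ n)
    (i : Fin n) (hi : i.val < k ∨ l ≤ i.val) : skipEmb k l (toCompl k l hk hkl hl i) = i := by
  apply Fin.ext
  rw [skipEmb_val, toCompl_val]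
  have := i.isLt
  split_ifs <;> omega

/-- the restriction of `r` to the interval `[k,l)`, reindexed on `Fin (l-k)` -/
def relInt (k l : ℕ) (hl : l ≤ n) (r : Fin n → Fin n → Bool) :
    Fin (l - k) → Fin (l - k) → Bool :=
  fun a b => r ⟨k + a.val, by have := a.isLt; omega⟩ ⟨k + b.val, by have := b.isLt; omega⟩

/-- joining a partition of the interval `[k,l)` with one of its complement -/
def joinRel (k l : ℕ) (hk : 1 ≤ k) (hkl : k < l) (hl : l ≤ n)
    (σ : Fin (l - k) → Fin (l - k) → Bool)
    (π : Fin (n - (l - k)) → Fin (n - (l - k)) → Bool) : Fin n → Fin n → Bool :=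
  fun i j =>
    if hi : k ≤ i.val ∧ i.val < l then
      if hj : k ≤ j.val ∧ j.val < l then σ ⟨i.val - k, by omega⟩ ⟨j.val - k, by omega⟩
      else false
    else
      if hj : k ≤ j.val ∧ j.val < l then false
      else π (toCompl k l hk hkl hl i) (toCompl k l hk hkl hl j)

lemma joinRel_mem {k l : ℕ} (hk : 1 ≤ k) (hkl : k < l) (hl : l ≤ n)
    {σ : Fin (l - k) → Fin (l - k) → Bool} {π : Fin (n - (l - k)) → Fin (n - (l - k)) → Bool}
    (i j : Fin n) (hi : k ≤ i.val ∧ i.val < l) (hj : k ≤ j.val ∧ j.val < l) :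
    joinRel k l hk hkl hl σ π i j = σ ⟨i.val - k, by omega⟩ ⟨j.val - k, by omega⟩ := by
  unfold joinRel
  rw [dif_pos hi, dif_pos hj]

lemma joinRel_notmem {k l : ℕ} (hk : 1 ≤ k) (hkl : k < l) (hl : l ≤ n)
    {σ : Fin (l - k) → Fin (l - k) → Bool} {π : Fin (n - (l - k)) → Fin (n - (l - k)) → Bool}
    (i j : Fin n) (hi : ¬(k ≤ i.val ∧ i.val < l)) (hj : ¬(k ≤ j.val ∧ j.val < l)) :
    joinRel k l hk hkl hl σ π i j = π (toCompl k l hk hkl hl i) (toCompl k l hk hkl hl j) := by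
  unfold joinRel
  rw [dif_neg hi, dif_neg hj]

lemma joinRel_mixed {k l : ℕ} (hk : 1 ≤ k) (hkl : k < l) (hl : l ≤ n)
    {σ : Fin (l - k) → Fin (l - k) → Bool} {π : Fin (n - (l - k)) → Fin (n - (l - k)) → Bool}
    (i j : Fin n) (h : (k ≤ i.val ∧ i.val < l) ↔ ¬(k ≤ j.val ∧ j.val < l)) :
    joinRel k l hk hkl hl σ π i j = false := by
  unfold joinRel
  by_cases hi : k ≤ i.val ∧ i.val < l
  · rw [dif_pos hi, dif_neg (h.mp hi)]
  · rw [dif_neg hi, dif_pos (by by_contra hj; exact hi (h.mpr hj))]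

end NCX3

section NCX4
variable {n : ℕ}

lemma isNCPart_relInt {r : Fin n → Fin n → Bool} (hr : IsNCPart n r) (k l : ℕ) (hl : l ≤ n) :
    IsNCPart (l - k) (relInt k l hl r) := by
  obtain ⟨hrefl, hsymm, htrans, hcross⟩ := hr
  refine ⟨fun i => hrefl _, fun i j h => hsymm _ _ h,
    fun i j m h1 h2 => htrans _ _ _ h1 h2, ?_⟩
  intro i k0 j l0 h1 h2 h3 hij hkl
  exact hcross _ _ _ _ (by
      show k + i.val < k + k0.val; omega) (by
      show k + k0.val < k + j.val; omega) (by
      show k + j.val < k + l0.val; omega) hij hkl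

lemma relLe_relRestr {r s : Fin n → Fin n → Bool} (h : relLe r s) (k l : ℕ) :
    relLe (relRestr r k l) (relRestr s k l) := fun i j hij => h _ _ hij

lemma isNCPart_joinRel {k l : ℕ} (hk : 1 ≤ k) (hkl : k < l) (hl : l ≤ n)
    {σ : Fin (l - k) → Fin (l - k) → Bool} {π : Fin (n - (l - k)) → Fin (n - (l - k)) → Bool}
    (hσ : IsNCPart (l - k) σ) (hπ : IsNCPart (n - (l - k)) π) :
    IsNCPart n (joinRel k l hk hkl hl σ π) := by
  obtain ⟨hσrefl, hσsymm, hσtrans, hσcross⟩ := hσ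
  obtain ⟨hπrefl, hπsymm, hπtrans, hπcross⟩ := hπ
  refine ⟨?_, ?_, ?_, ?_⟩
  · intro i
    by_cases hi : k ≤ i.val ∧ i.val < l
    · rw [joinRel_mem hk hkl hl i i hi hi]; exact hσrefl _
    · rw [joinRel_notmem hk hkl hl i i hi hi]; exact hπrefl _
  · intro i j h
    by_cases hi : k ≤ i.val ∧ i.val < l <;> by_cases hj : k ≤ j.val ∧ j.val < l
    · rw [joinRel_mem hk hkl hl i j hi hj] at h
      rw [joinRel_mem hk hkl hl j i hj hi]; exact hσsymm _ _ h
    · rw [joinRel_mixed hk hkl hl i j (by tauto)] at h; exact absurd h (by simp)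
    · rw [joinRel_mixed hk hkl hl i j (by tauto)] at h; exact absurd h (by simp)
    · rw [joinRel_notmem hk hkl hl i j hi hj] at h
      rw [joinRel_notmem hk hkl hl j i hj hi]; exact hπsymm _ _ h
  · intro i j m h1 h2
    by_cases hi : k ≤ i.val ∧ i.val < l <;> by_cases hj : k ≤ j.val ∧ j.val < l <;>
      by_cases hm : k ≤ m.val ∧ m.val < l
    · rw [joinRel_mem hk hkl hl i j hi hj] at h1
      rw [joinRel_mem hk hkl hl j m hj hm] at h2
      rw [joinRel_mem hk hkl hl i m hi hm]; exact hσtrans _ _ _ h1 h2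
    · rw [joinRel_mixed hk hkl hl j m (by tauto)] at h2; exact absurd h2 (by simp)
    · rw [joinRel_mixed hk hkl hl i j (by tauto)] at h1; exact absurd h1 (by simp)
    · rw [joinRel_mixed hk hkl hl i j (by tauto)] at h1; exact absurd h1 (by simp)
    · rw [joinRel_mixed hk hkl hl i j (by tauto)] at h1; exact absurd h1 (by simp)
    · rw [joinRel_mixed hk hkl hl i j (by tauto)] at h1; exact absurd h1 (by simp)
    · rw [joinRel_mixed hk hkl hl j m (by tauto)] at h2; exact absurd h2 (by simp)
    · rw [joinRel_notmem hk hkl hl i j hi hj] at h1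
      rw [joinRel_notmem hk hkl hl j m hj hm] at h2
      rw [joinRel_notmem hk hkl hl i m hi hm]; exact hπtrans _ _ _ h1 h2
  · intro i k0 j m h1 h2 h3 hij hkm
    have hval1 : i.val < k0.val := h1
    have hval2 : k0.val < j.val := h2
    have hval3 : j.val < m.val := h3
    by_cases hi : k ≤ i.val ∧ i.val < l <;> by_cases hj : k ≤ j.val ∧ j.val < l
    · -- i, j in the interval, so k0 in the interval
      have hk0 : k ≤ k0.val ∧ k0.val < l := ⟨by omega, by omega⟩
      by_cases hm : k ≤ m.val ∧ m.val < l
      · rw [joinRel_mem hk hkl hl i j hi hj] at hij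
        rw [joinRel_mem hk hkl hl k0 m hk0 hm] at hkm
        rw [joinRel_mem hk hkl hl i k0 hi hk0]
        exact hσcross _ _ _ _ (by show i.val - k < k0.val - k; omega)
          (by show k0.val - k < j.val - k; omega) (by show j.val - k < m.val - k; omega) hij hkm
      · rw [joinRel_mixed hk hkl hl k0 m (by tauto)] at hkm; exact absurd hkm (by simp)
    · rw [joinRel_mixed hk hkl hl i j (by tauto)] at hij; exact absurd hij (by simp)
    · rw [joinRel_mixed hk hkl hl i j (by tauto)] at hij; exact absurd hij (by simp)
    · -- i, j outside the interval
      by_cases hk0 : k ≤ k0.val ∧ k0.val < l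
      · -- then m in the interval, but m > j ≥ l, contradiction
        have hjl : l ≤ j.val := by omega
        have hm : ¬(k ≤ m.val ∧ m.val < l) := by omega
        rw [joinRel_mixed hk hkl hl k0 m (by tauto)] at hkm; exact absurd hkm (by simp)
      · by_cases hm : k ≤ m.val ∧ m.val < l
        · rw [joinRel_mixed hk hkl hl k0 m (by tauto)] at hkm; exact absurd hkm (by simp)
        · rw [joinRel_notmem hk hkl hl i j hi hj] at hij
          rw [joinRel_notmem hk hkl hl k0 m hk0 hm] at hkm
          rw [joinRel_notmem hk hkl hl i k0 hi hk0]
          refine hπcross _ _ _ _ ?_ ?_ ?_ hij hkm <;>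
            · show _ < _
              rw [Fin.lt_def, toCompl_val, toCompl_val]
              split_ifs <;> omega
end NCX4

section NCX5
variable {n : ℕ}

lemma relLe_joinRel {k l : ℕ} (hk : 1 ≤ k) (hkl : k < l) (hl : l ≤ n)
    {σ : Fin (l - k) → Fin (l - k) → Bool} {π : Fin (n - (l - k)) → Fin (n - (l - k)) → Bool}
    {τ : Fin n → Fin n → Bool} (hIB : IsIntervalBlock τ k l)
    (hπρ : relLe π (relRestr τ k l)) : relLe (joinRel k l hk hkl hl σ π) τ := by
  intro i j h
  by_cases hi : k ≤ i.val ∧ i.val < l <;> by_cases hj : k ≤ j.val ∧ j.val < l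
  · exact (hIB.2.2 i j hi.1 hi.2).mpr hj
  · rw [joinRel_mixed hk hkl hl i j (by tauto)] at h; exact absurd h (by simp)
  · rw [joinRel_mixed hk hkl hl i j (by tauto)] at h; exact absurd h (by simp)
  · rw [joinRel_notmem hk hkl hl i j hi hj] at h
    have := hπρ _ _ h
    unfold relRestr at this
    rwa [skipEmb_toCompl k l hk hkl hl i (by omega), skipEmb_toCompl k l hk hkl hl j (by omega)]
      at this

lemma relInt_joinRel {k l : ℕ} (hk : 1 ≤ k) (hkl : k < l) (hl : l ≤ n)
    (σ : Fin (l - k) → Fin (l - k) → Bool) (π : Fin (n - (l - k)) → Fin (n - (l - k)) → Bool) :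
    relInt k l hl (joinRel k l hk hkl hl σ π) = σ := by
  funext a b
  have ha := a.isLt
  have hb := b.isLt
  unfold relInt joinRel
  rw [dif_pos (show k ≤ k + a.val ∧ k + a.val < l by omega),
    dif_pos (show k ≤ k + b.val ∧ k + b.val < l by omega)]
  congr 1 <;> exact Fin.ext (by show _ = _; simp)

lemma relRestr_joinRel {k l : ℕ} (hk : 1 ≤ k) (hkl : k < l) (hl : l ≤ n)
    (σ : Fin (l - k) → Fin (l - k) → Bool) (π : Fin (n - (l - k)) → Fin (n - (l - k)) → Bool) :
    relRestr (joinRel k l hk hkl hl σ π) k l = π := by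
  funext i j
  unfold relRestr
  rw [joinRel_notmem hk hkl hl _ _ (by have := skipEmb_not_mem (by omega : k ≤ l) i; omega)
    (by have := skipEmb_not_mem (by omega : k ≤ l) j; omega)]
  rw [toCompl_skipEmb, toCompl_skipEmb]

lemma joinRel_relInt_relRestr {k l : ℕ} (hk : 1 ≤ k) (hkl : k < l) (hl : l ≤ n)
    {π : Fin n → Fin n → Bool} (hsymm : ∀ i j, π i j → π j i)
    (hcl : ∀ i j : Fin n, k ≤ i.val → i.val < l → π i j → k ≤ j.val ∧ j.val < l) :
    joinRel k l hk hkl hl (relInt k l hl π) (relRestr π k l) = π := by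
  funext i j
  by_cases hi : k ≤ i.val ∧ i.val < l <;> by_cases hj : k ≤ j.val ∧ j.val < l
  · rw [joinRel_mem hk hkl hl i j hi hj]
    unfold relInt
    congr 1 <;> exact Fin.ext (by simp; omega)
  · rw [joinRel_mixed hk hkl hl i j (by tauto)]
    cases hval : π i j with
    | false => rfl
    | true => exact absurd (hcl i j hi.1 hi.2 hval) hj
  · rw [joinRel_mixed hk hkl hl i j (by tauto)]
    cases hval : π i j with
    | false => rfl
    | true => exact absurd (hcl j i hj.1 hj.2 (hsymm _ _ hval)) hi
  · rw [joinRel_notmem hk hkl hl i j hi hj]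
    unfold relRestr
    rw [skipEmb_toCompl k l hk hkl hl i (by omega), skipEmb_toCompl k l hk hkl hl j (by omega)]

lemma intervalBlock_lift {k l : ℕ} (hkl : k < l) (hl : l ≤ n)
    {π : Fin n → Fin n → Bool}
    (hcl : ∀ i j : Fin n, k ≤ i.val → i.val < l → π i j → k ≤ j.val ∧ j.val < l)
    {a b : ℕ} (hab : IsIntervalBlock (relInt k l hl π) a b) :
    IsIntervalBlock π (k + a) (k + b) := by
  obtain ⟨hab1, hab2, hab3⟩ := hab
  refine ⟨by omega, by omega, ?_⟩
  intro i j hi1 hi2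
  have hiI : k ≤ i.val ∧ i.val < l := ⟨by omega, by omega⟩
  constructor
  · intro hij
    have hjI := hcl i j hiI.1 hiI.2 hij
    have heq : relInt k l hl π ⟨i.val - k, by omega⟩ ⟨j.val - k, by omega⟩ = π i j := by
      unfold relInt; congr 1 <;> exact Fin.ext (by simp; omega)
    have := (hab3 ⟨i.val - k, by omega⟩ ⟨j.val - k, by omega⟩ (by simp; omega)
      (by simp; omega)).mp (by rw [heq]; exact hij)
    simp at this
    omega
  · rintro ⟨hj1, hj2⟩
    have heq : relInt k l hl π ⟨i.val - k, by omega⟩ ⟨j.val - k, by omega⟩ = π i j := by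
      unfold relInt; congr 1 <;> exact Fin.ext (by simp; omega)
    rw [← heq]
    exact (hab3 ⟨i.val - k, by omega⟩ ⟨j.val - k, by omega⟩ (by simp; omega)
      (by simp; omega)).mpr (by constructor <;> (simp; omega))

lemma intervalBlock_of_relInt_top {k l : ℕ} (hkl : k < l) (hl : l ≤ n)
    {π : Fin n → Fin n → Bool}
    (hcl : ∀ i j : Fin n, k ≤ i.val → i.val < l → π i j → k ≤ j.val ∧ j.val < l)
    (htop : relInt k l hl π = relTop (l - k)) : IsIntervalBlock π k l := by
  refine ⟨hkl, hl, ?_⟩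
  intro i j hi1 hi2
  constructor
  · intro hij; exact hcl i j hi1 hi2 hij
  · rintro ⟨hj1, hj2⟩
    have heq : relInt k l hl π ⟨i.val - k, by omega⟩ ⟨j.val - k, by omega⟩ = π i j := by
      unfold relInt; congr 1 <;> exact Fin.ext (by simp; omega)
    rw [← heq, htop]
    rfl
end NCX5

section FamCongr
variable {A : Type} [Ring A]

lemma fam_congr (F : ∀ m : ℕ, (Fin m → A) → A) {m1 m2 : ℕ} (h : m1 = m2)
    {y1 : Fin m1 → A} {y2 : Fin m2 → A} (hy : ∀ i : Fin m1, y1 i = y2 (Fin.cast h i)) :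
    F m1 y1 = F m2 y2 := by
  subst h
  congr 1
  funext i
  exact hy i

lemma fam2_congr (F : ∀ m : ℕ, (Fin m → Fin m → Bool) → (Fin m → A) → A) {m1 m2 : ℕ}
    (h : m1 = m2) {r1 : Fin m1 → Fin m1 → Bool} {r2 : Fin m2 → Fin m2 → Bool}
    {y1 : Fin m1 → A} {y2 : Fin m2 → A}
    (hr : ∀ i j : Fin m1, r1 i j = r2 (Fin.cast h i) (Fin.cast h j))
    (hy : ∀ i : Fin m1, y1 i = y2 (Fin.cast h i)) :
    F m1 r1 y1 = F m2 r2 y2 := by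
  subst h
  have : r1 = r2 := by funext i j; exact hr i j
  subst this
  congr 1
  funext i
  exact hy i

end FamCongr

section SpliceApply
variable {A : Type} [Ring A] {n : ℕ}

lemma splice_apply_lt (x : Fin n → A) (k l : ℕ) (b : A) (j : Fin (n - (l - k)))
    (h : j.val + 1 < k) : splice x k l b j = x ⟨j.val, by have := j.isLt; omega⟩ := by
  simp only [splice]
  rw [if_pos h]

lemma splice_apply_eq (x : Fin n → A) (k l : ℕ) (b : A) (j : Fin (n - (l - k)))
    (h : j.val + 1 = k) : splice x k l b j = x ⟨j.val, by have := j.isLt; omega⟩ * b := by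
  simp only [splice]
  rw [if_neg (by omega), if_pos h]

lemma splice_apply_ge (x : Fin n → A) (k l : ℕ) (b : A) (j : Fin (n - (l - k)))
    (h : k ≤ j.val) : splice x k l b j = x ⟨j.val + (l - k), by have := j.isLt; omega⟩ := by
  simp only [splice]
  rw [if_neg (by omega), if_neg (by omega)]

end SpliceApply

section Split
variable {A : Type} [Ring A]

lemma Kappa_split (kappa : ∀ n : ℕ, (Fin n → A) → A)
    (Kappa : ∀ n : ℕ, (Fin n → Fin n → Bool) → (Fin n → A) → A)
    (hK : IsMultExt kappa Kappa) :
    ∀ N : ℕ, ∀ π : Fin N → Fin N → Bool, IsNCPart N π →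
    ∀ k l : ℕ, 1 ≤ k → k < l → ∀ hl : l ≤ N,
    (∀ i j : Fin N, k ≤ i.val → i.val < l → π i j → k ≤ j.val ∧ j.val < l) →
    ∀ x : Fin N → A,
    Kappa N π x = Kappa (N - (l - k)) (relRestr π k l)
      (splice x k l (Kappa (l - k) (relInt k l hl π)
        (fun j => x ⟨k + j.val, by have := j.isLt; omega⟩))) := by
  intro N
  induction N using Nat.strong_induction_on with
  | _ N IH =>
  intro π hπ k l hk hkl hl hcl x
  by_cases htop : relInt k l hl π = relTop (l - k)
  · -- base case: the interval is a single block of π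
    have hIB : IsIntervalBlock π k l := intervalBlock_of_relInt_top hkl hl hcl htop
    rw [htop, hK.1 (l - k)]
    exact hK.2 N π hπ k l hk hIB x
  · -- inductive step: peel off an interval block of π inside the interval
    have xCongr : ∀ {u w : Fin N}, u = w → x u = x w := fun h => by rw [h]
    set σ := relInt k l hl π with hσdef
    have hσ : IsNCPart (l - k) σ := isNCPart_relInt hπ k l hl
    obtain ⟨a, b, ha, hab⟩ := exists_intervalBlock_pos hσ (by omega) htop
    have hab1 : a < b := hab.1
    have hab2 : b ≤ l - k := hab.2.1
    have hIB' : IsIntervalBlock π (k + a) (k + b) := intervalBlock_lift hkl hl hcl hab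
    set k' := k + a with hk'def
    set l' := k + b with hl'def
    have hd : l' - k' = b - a := by omega
    set c1 := kappa (l' - k') (fun j : Fin (l' - k') =>
      x ⟨k' + j.val, by have := j.isLt; have := hIB'.2.1; omega⟩) with hc1def
    have step1 := hK.2 N π hπ k' l' (by omega) hIB' x
    set Nh := N - (l' - k') with hNhdef
    set xh : Fin Nh → A := splice x k' l' c1 with hxhdef
    set πh := relRestr π k' l' with hπhdef
    have hπh : IsNCPart Nh πh := isNCPart_relRestr hπ k' l'
    set lh := l - (l' - k') with hlhdef
    have hNh : Nh < N := by omega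
    have hklh : k < lh := by omega
    have hlh : lh ≤ Nh := by omega
    have hπsymm : ∀ u v, π u v → π v u := hπ.2.1
    -- closure of the shrunken interval under πh
    have hclh : ∀ i j : Fin Nh, k ≤ i.val → i.val < lh → πh i j → k ≤ j.val ∧ j.val < lh := by
      intro i j h1 h2 hij
      have hvi := skipEmb_val k' l' i
      have hvj := skipEmb_val k' l' j
      have hiI : k ≤ (skipEmb k' l' i).val ∧ (skipEmb k' l' i).val < l := by
        rw [hvi]; split <;> omega
      have hj := hcl _ _ hiI.1 hiI.2 hij
      rw [hvj] at hj
      rcases Nat.lt_or_ge j.val k' with hc | hc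
      · rw [if_pos hc] at hj; omega
      · rw [if_neg (by omega)] at hj; omega
    have step2 := IH Nh hNh πh hπh k lh hk hklh hlh hclh xh
    rw [step1, step2]
    have hmm : Nh - (lh - k) = N - (l - k) := by omega
    refine fam2_congr (Kappa) hmm ?_ ?_
    · -- the outer partitions agree
      intro i j
      have hii := i.isLt
      have hjj := j.isLt
      show πh (skipEmb k lh i) (skipEmb k lh j) =
        π (skipEmb k l (Fin.cast hmm i)) (skipEmb k l (Fin.cast hmm j))
      show π (skipEmb k' l' (skipEmb k lh i)) (skipEmb k' l' (skipEmb k lh j)) = _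
      have key : ∀ m : Fin (Nh - (lh - k)),
          skipEmb k' l' (skipEmb k lh m) = skipEmb k l (Fin.cast hmm m) := by
        intro m
        apply Fin.ext
        rw [skipEmb_val, skipEmb_val, skipEmb_val]
        have := m.isLt
        simp only [Fin.coe_cast]
        split_ifs <;> omega
      rw [key i, key j]
    · -- the tuples agree
      intro i
      have hii := i.isLt
      -- first, the inner Kappa values agree
      have hinner : Kappa (lh - k) (relInt k lh hlh πh)
            (fun j : Fin (lh - k) => xh ⟨k + j.val, by have := j.isLt; omega⟩) =
          Kappa (l - k) σ (fun j : Fin (l - k) => x ⟨k + j.val, by have := j.isLt; omega⟩) := by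
        have hstep := hK.2 (l - k) σ hσ a b ha hab
          (fun j : Fin (l - k) => x ⟨k + j.val, by have := j.isLt; omega⟩)
        rw [hstep]
        have hmm2 : lh - k = (l - k) - (b - a) := by omega
        refine fam2_congr (Kappa) hmm2 ?_ ?_
        · intro p q
          have hpp := p.isLt
          have hqq := q.isLt
          have hp2 : k + p.val < Nh := by omega
          have hq2 : k + q.val < Nh := by omega
          show π (skipEmb k' l' ⟨k + p.val, hp2⟩) (skipEmb k' l' ⟨k + q.val, hq2⟩) =
            σ (skipEmb a b (Fin.cast hmm2 p)) (skipEmb a b (Fin.cast hmm2 q))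
          have hpf3 : k + (skipEmb a b (Fin.cast hmm2 p)).val < N := by
            have := (skipEmb a b (Fin.cast hmm2 p)).isLt; omega
          have hqf3 : k + (skipEmb a b (Fin.cast hmm2 q)).val < N := by
            have := (skipEmb a b (Fin.cast hmm2 q)).isLt; omega
          have e1 : skipEmb k' l' ⟨k + p.val, hp2⟩ =
              (⟨k + (skipEmb a b (Fin.cast hmm2 p)).val, hpf3⟩ : Fin N) := by
            apply Fin.ext
            show (skipEmb k' l' ⟨k + p.val, hp2⟩).val =
              k + (skipEmb a b (Fin.cast hmm2 p)).val
            rw [skipEmb_val, skipEmb_val]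
            simp only [Fin.coe_cast]
            split_ifs <;> omega
          have e2 : skipEmb k' l' ⟨k + q.val, hq2⟩ =
              (⟨k + (skipEmb a b (Fin.cast hmm2 q)).val, hqf3⟩ : Fin N) := by
            apply Fin.ext
            show (skipEmb k' l' ⟨k + q.val, hq2⟩).val =
              k + (skipEmb a b (Fin.cast hmm2 q)).val
            rw [skipEmb_val, skipEmb_val]
            simp only [Fin.coe_cast]
            split_ifs <;> omega
          rw [e1, e2, hσdef]
          rfl
        · intro p
          have hpp := p.isLt
          have hp2 : k + p.val < Nh := by omega
          show splice x k' l' c1 ⟨k + p.val, hp2⟩ = _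
          have hpc : (Fin.cast hmm2 p).val = p.val := rfl
          rcases Nat.lt_trichotomy (p.val + 1) a with hp | hp | hp
          · rw [splice_apply_lt x k' l' c1 ⟨k + p.val, hp2⟩ (show k + p.val + 1 < k' by omega),
              splice_apply_lt _ a b _ (Fin.cast hmm2 p) (by rw [hpc]; omega)]
            exact xCongr (Fin.ext (by show k + p.val = k + (Fin.cast hmm2 p).val; rw [hpc]))
          · rw [splice_apply_eq x k' l' c1 ⟨k + p.val, hp2⟩ (show k + p.val + 1 = k' by omega),
              splice_apply_eq _ a b _ (Fin.cast hmm2 p) (by rw [hpc]; omega)]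
            refine congrArg₂ (· * ·)
              (xCongr (Fin.ext (by show k + p.val = k + (Fin.cast hmm2 p).val; rw [hpc]))) ?_
            refine fam_congr (kappa) hd ?_
            intro q
            have hqq := q.isLt
            have hqc : (Fin.cast hd q).val = q.val := rfl
            exact xCongr (Fin.ext (by
              show k' + q.val = k + (a + (Fin.cast hd q).val); rw [hqc]; omega))
          · rw [splice_apply_ge x k' l' c1 ⟨k + p.val, hp2⟩ (show k' ≤ k + p.val by omega),
              splice_apply_ge _ a b _ (Fin.cast hmm2 p) (by rw [hpc]; omega)]
            exact xCongr (Fin.ext (by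
              show k + p.val + (l' - k') = k + ((Fin.cast hmm2 p).val + (b - a)); rw [hpc]; omega))
      rw [hinner]
      -- now the outer splice tuples agree
      set C := Kappa (l - k) σ (fun j : Fin (l - k) => x ⟨k + j.val, by have := j.isLt; omega⟩)
        with hCdef
      have hic : (Fin.cast hmm i).val = i.val := rfl
      rcases Nat.lt_trichotomy (i.val + 1) k with h1 | h1 | h1
      · rw [splice_apply_lt xh k lh C i h1,
          splice_apply_lt x k l C (Fin.cast hmm i) (by rw [hic]; omega)]
        show splice x k' l' c1 ⟨i.val, _⟩ = _
        rw [splice_apply_lt x k' l' c1 ⟨i.val, by omega⟩ (show i.val + 1 < k' by omega)]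
        exact xCongr (Fin.ext (by show i.val = (Fin.cast hmm i).val; rw [hic]))
      · rw [splice_apply_eq xh k lh C i h1,
          splice_apply_eq x k l C (Fin.cast hmm i) (by rw [hic]; omega)]
        show splice x k' l' c1 ⟨i.val, _⟩ * C = _
        rw [splice_apply_lt x k' l' c1 ⟨i.val, by omega⟩ (show i.val + 1 < k' by omega)]
        exact congrArg₂ (· * ·)
          (xCongr (Fin.ext (by show i.val = (Fin.cast hmm i).val; rw [hic]))) rfl
      · rw [splice_apply_ge xh k lh C i (by omega),
          splice_apply_ge x k l C (Fin.cast hmm i) (by rw [hic]; omega)]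
        show splice x k' l' c1 ⟨i.val + (lh - k), _⟩ = _
        rw [splice_apply_ge x k' l' c1 ⟨i.val + (lh - k), by omega⟩
          (show k' ≤ i.val + (lh - k) by omega)]
        exact xCongr (Fin.ext (by
          show i.val + (lh - k) + (l' - k') = (Fin.cast hmm i).val + (l - k); rw [hic]; omega))
end Split

section MemB
variable {A : Type} [Ring A] [Algebra ℂ A] (B : Subalgebra ℂ A)

lemma Kappa_mem (kappa : ∀ n : ℕ, (Fin n → A) → A)
    (Kappa : ∀ n : ℕ, (Fin n → Fin n → Bool) → (Fin n → A) → A)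
    (hK : IsMultExt kappa Kappa) (hkB : ∀ (n : ℕ) (x : Fin n → A), kappa n x ∈ B) :
    ∀ N : ℕ, ∀ r : Fin N → Fin N → Bool, IsNCPart N r → ∀ x : Fin N → A,
      Kappa N r x ∈ B := by
  intro N
  induction N using Nat.strong_induction_on with
  | _ N IH =>
  intro r hr x
  by_cases htop : r = relTop N
  · rw [htop, hK.1]; exact hkB N x
  · have hN : 1 ≤ N := by
      by_contra h
      exact htop (by
        have : N = 0 := by omega
        subst this
        exact eq_relTop_of_dim0 r)
    obtain ⟨k, l, hk, hIB⟩ := exists_intervalBlock_pos hr hN htop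
    rw [hK.2 N r hr k l hk hIB x]
    exact IH (N - (l - k)) (by have := hIB.1; have := hIB.2.1; omega) _
      (isNCPart_relRestr hr k l) _
end MemB

section SpliceUpdate
variable {A : Type} [Ring A] {N : ℕ} (x : Fin N → A) {k l : ℕ}

lemma splice_update_lt (i : Fin N) (hi : i.val + 1 < k) (v c : A)
    (pf : i.val < N - (l - k)) :
    splice (Function.update x i v) k l c =
      Function.update (splice x k l c) ⟨i.val, pf⟩ v := by
  funext q
  have hq := q.isLt
  rw [Function.update_apply]
  by_cases hqi : q.val = i.val
  · rw [if_pos (Fin.ext hqi), splice_apply_lt _ k l c q (by omega)]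
    rw [show ((⟨q.val, by omega⟩ : Fin N)) = i from Fin.ext (by simp only [Fin.val_mk]; omega)]
    exact Function.update_self i v x
  · rw [if_neg (fun hc => hqi (by rw [hc]))]
    rcases Nat.lt_trichotomy (q.val + 1) k with h | h | h
    · rw [splice_apply_lt _ k l c q h, splice_apply_lt x k l c q h]
      refine Function.update_of_ne (Fin.ne_of_val_ne ?_) v x
      simp only [Fin.val_mk]; omega
    · rw [splice_apply_eq _ k l c q h, splice_apply_eq x k l c q h]
      refine congrArg (· * c) (Function.update_of_ne (Fin.ne_of_val_ne ?_) v x)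
      simp only [Fin.val_mk]; omega
    · rw [splice_apply_ge _ k l c q (by omega), splice_apply_ge x k l c q (by omega)]
      refine Function.update_of_ne (Fin.ne_of_val_ne ?_) v x
      simp only [Fin.val_mk]; omega

lemma splice_update_eqk (i : Fin N) (hi : i.val + 1 = k) (v c : A)
    (pf : i.val < N - (l - k)) :
    splice (Function.update x i v) k l c =
      Function.update (splice x k l c) ⟨i.val, pf⟩ (v * c) := by
  funext q
  have hq := q.isLt
  rw [Function.update_apply]
  by_cases hqi : q.val = i.val
  · rw [if_pos (Fin.ext hqi), splice_apply_eq _ k l c q (by omega)]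
    rw [show ((⟨q.val, by omega⟩ : Fin N)) = i from Fin.ext (by simp only [Fin.val_mk]; omega)]
    rw [Function.update_self i v x]
  · rw [if_neg (fun hc => hqi (by rw [hc]))]
    rcases Nat.lt_trichotomy (q.val + 1) k with h | h | h
    · rw [splice_apply_lt _ k l c q h, splice_apply_lt x k l c q h]
      refine Function.update_of_ne (Fin.ne_of_val_ne ?_) v x
      simp only [Fin.val_mk]; omega
    · exact absurd h (by omega)
    · rw [splice_apply_ge _ k l c q (by omega), splice_apply_ge x k l c q (by omega)]
      refine Function.update_of_ne (Fin.ne_of_val_ne ?_) v x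
      simp only [Fin.val_mk]; omega

lemma splice_update_ge (hl : l ≤ N) (hkl : k < l) (i : Fin N) (hi : l ≤ i.val) (v c : A)
    (pf : i.val - (l - k) < N - (l - k)) :
    splice (Function.update x i v) k l c =
      Function.update (splice x k l c) ⟨i.val - (l - k), pf⟩ v := by
  funext q
  have hq := q.isLt
  rw [Function.update_apply]
  by_cases hqi : q.val = i.val - (l - k)
  · rw [if_pos (Fin.ext hqi), splice_apply_ge _ k l c q (by omega)]
    rw [show ((⟨q.val + (l - k), by omega⟩ : Fin N)) = i from
      Fin.ext (by simp only [Fin.val_mk]; omega)]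
    exact Function.update_self i v x
  · rw [if_neg (fun hc => hqi (by rw [hc]))]
    rcases Nat.lt_trichotomy (q.val + 1) k with h | h | h
    · rw [splice_apply_lt _ k l c q h, splice_apply_lt x k l c q h]
      refine Function.update_of_ne (Fin.ne_of_val_ne ?_) v x
      simp only [Fin.val_mk]; omega
    · rw [splice_apply_eq _ k l c q h, splice_apply_eq x k l c q h]
      refine congrArg (· * c) (Function.update_of_ne (Fin.ne_of_val_ne ?_) v x)
      simp only [Fin.val_mk]; omega
    · rw [splice_apply_ge _ k l c q (by omega), splice_apply_ge x k l c q (by omega)]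
      refine Function.update_of_ne (Fin.ne_of_val_ne ?_) v x
      simp only [Fin.val_mk]; omega

lemma splice_update_mid (i : Fin N) (hi1 : k ≤ i.val) (hi2 : i.val < l) (v c : A) :
    splice (Function.update x i v) k l c = splice x k l c := by
  funext q
  have hq := q.isLt
  rcases Nat.lt_trichotomy (q.val + 1) k with h | h | h
  · rw [splice_apply_lt _ k l c q h, splice_apply_lt x k l c q h]
    refine Function.update_of_ne (Fin.ne_of_val_ne ?_) v x
    simp only [Fin.val_mk]; omega
  · rw [splice_apply_eq _ k l c q h, splice_apply_eq x k l c q h]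
    refine congrArg (· * c) (Function.update_of_ne (Fin.ne_of_val_ne ?_) v x)
    simp only [Fin.val_mk]; omega
  · rw [splice_apply_ge _ k l c q (by omega), splice_apply_ge x k l c q (by omega)]
    refine Function.update_of_ne (Fin.ne_of_val_ne ?_) v x
    simp only [Fin.val_mk]; omega

lemma splice_c_update (hk1 : 1 ≤ k) (hkl : k < l) (hl : l ≤ N) (c c' : A)
    (pf : k - 1 < N - (l - k)) (pf2 : k - 1 < N) :
    splice x k l c =
      Function.update (splice x k l c') ⟨k - 1, pf⟩ (x ⟨k - 1, pf2⟩ * c) := by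
  funext q
  have hq := q.isLt
  rw [Function.update_apply]
  by_cases hqi : q.val = k - 1
  · rw [if_pos (Fin.ext hqi), splice_apply_eq x k l c q (by omega)]
    exact congrArg (· * c) (congrArg x (Fin.ext (by simp only [Fin.val_mk]; omega)))
  · rw [if_neg (fun hc => hqi (by rw [hc]))]
    rcases Nat.lt_trichotomy (q.val + 1) k with h | h | h
    · rw [splice_apply_lt x k l c q h, splice_apply_lt x k l c' q h]
    · exact absurd h (by omega)
    · rw [splice_apply_ge x k l c q (by omega), splice_apply_ge x k l c' q (by omega)]

lemma tup_update_outside (hl : l ≤ N) (i : Fin N) (hi : i.val < k ∨ l ≤ i.val) (v : A) :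
    (fun j : Fin (l - k) => Function.update x i v ⟨k + j.val, by have := j.isLt; omega⟩) =
      (fun j : Fin (l - k) => x ⟨k + j.val, by have := j.isLt; omega⟩) := by
  funext j
  have hj := j.isLt
  refine Function.update_of_ne (Fin.ne_of_val_ne ?_) v x
  simp only [Fin.val_mk]; omega

lemma tup_update_inside (hl : l ≤ N) (i : Fin N) (hi1 : k ≤ i.val) (hi2 : i.val < l) (v : A)
    (pf : i.val - k < l - k) :
    (fun j : Fin (l - k) => Function.update x i v ⟨k + j.val, by have := j.isLt; omega⟩) =
      Function.update (fun j : Fin (l - k) => x ⟨k + j.val, by have := j.isLt; omega⟩)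
        ⟨i.val - k, pf⟩ v := by
  funext j
  have hj := j.isLt
  simp only [Function.update_apply]
  by_cases hji : j.val = i.val - k
  · rw [if_pos (Fin.ext (show (⟨k + j.val, by omega⟩ : Fin N).val = i.val by
        simp only [Fin.val_mk]; omega)),
      if_pos (Fin.ext (show j.val = (⟨i.val - k, pf⟩ : Fin (l - k)).val by
        simp only [Fin.val_mk]; omega))]
  · rw [if_neg (fun hc => hji (by
        have := congrArg Fin.val hc
        simp only [Fin.val_mk] at this
        omega)),
      if_neg (fun hc => hji (by
        have := congrArg Fin.val hc
        simp only [Fin.val_mk] at this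
        omega))]

end SpliceUpdate

section PhiAdd
variable {A : Type} [Ring A]

lemma Phi_update_add (phi : ∀ n : ℕ, (Fin n → A) → A)
    (Phi : ∀ n : ℕ, (Fin n → Fin n → Bool) → (Fin n → A) → A)
    (hP : IsMultExt phi Phi)
    (hadd : ∀ (n : ℕ) (x : Fin n → A) (i : Fin n) (a b : A),
      phi n (Function.update x i (a + b)) =
        phi n (Function.update x i a) + phi n (Function.update x i b)) :
    ∀ N : ℕ, ∀ r : Fin N → Fin N → Bool, IsNCPart N r →
      ∀ (x : Fin N → A) (i : Fin N) (a b : A),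
      Phi N r (Function.update x i (a + b)) =
        Phi N r (Function.update x i a) + Phi N r (Function.update x i b) := by
  intro N
  induction N using Nat.strong_induction_on with
  | _ N IH =>
  intro r hr x i a b
  by_cases htop : r = relTop N
  · rw [htop, hP.1, hP.1, hP.1]; exact hadd N x i a b
  · have hN : 1 ≤ N := by
      by_contra h
      exact htop (by
        have : N = 0 := by omega
        subst this
        exact eq_relTop_of_dim0 r)
    obtain ⟨k, l, hk, hIB⟩ := exists_intervalBlock_pos hr hN htop
    have hkl := hIB.1
    have hl := hIB.2.1
    have hρ := isNCPart_relRestr hr k l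
    have hn' : N - (l - k) < N := by omega
    have hii := i.isLt
    rw [hP.2 N r hr k l hk hIB (Function.update x i (a + b)),
      hP.2 N r hr k l hk hIB (Function.update x i a),
      hP.2 N r hr k l hk hIB (Function.update x i b)]
    rcases Nat.lt_trichotomy (i.val + 1) k with hc | hc | hc
    · -- i strictly before position k-1
      have htup := fun v => tup_update_outside (k := k) x hl i (Or.inl (by omega)) v
      rw [htup (a + b), htup a, htup b]
      have pfi : i.val < N - (l - k) := by omega
      rw [splice_update_lt x i hc (a + b) _ pfi, splice_update_lt x i hc a _ pfi,
        splice_update_lt x i hc b _ pfi]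
      exact IH _ hn' _ hρ _ _ a b
    · -- i at position k-1
      have htup := fun v => tup_update_outside (k := k) x hl i (Or.inl (by omega)) v
      rw [htup (a + b), htup a, htup b]
      have pfi : i.val < N - (l - k) := by omega
      rw [splice_update_eqk x i hc (a + b) _ pfi, splice_update_eqk x i hc a _ pfi,
        splice_update_eqk x i hc b _ pfi, add_mul]
      exact IH _ hn' _ hρ _ _ _ _
    · by_cases hcl : i.val < l
      · -- i inside the interval
        have hpf : i.val - k < l - k := by omega
        have htup := fun v => tup_update_inside x hl i (by omega) hcl v hpf
        rw [htup (a + b), htup a, htup b]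
        rw [splice_update_mid x i (by omega) hcl (a + b) _,
          splice_update_mid x i (by omega) hcl a _,
          splice_update_mid x i (by omega) hcl b _]
        rw [hadd (l - k) _ ⟨i.val - k, hpf⟩ a b]
        have hkn' : k - 1 < N - (l - k) := by omega
        have hkN : k - 1 < N := by omega
        have e0 := fun c : A => splice_c_update x hk hkl hl c 0 hkn' hkN
        rw [e0 (phi (l - k) (Function.update
              (fun j : Fin (l - k) => x ⟨k + j.val, by have := j.isLt; omega⟩)
              ⟨i.val - k, hpf⟩ a) +
            phi (l - k) (Function.update
              (fun j : Fin (l - k) => x ⟨k + j.val, by have := j.isLt; omega⟩)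
              ⟨i.val - k, hpf⟩ b)),
          e0 (phi (l - k) (Function.update
              (fun j : Fin (l - k) => x ⟨k + j.val, by have := j.isLt; omega⟩)
              ⟨i.val - k, hpf⟩ a)),
          e0 (phi (l - k) (Function.update
              (fun j : Fin (l - k) => x ⟨k + j.val, by have := j.isLt; omega⟩)
              ⟨i.val - k, hpf⟩ b)),
          mul_add]
        exact IH _ hn' _ hρ _ _ _ _
      · -- i after the interval
        have htup := fun v => tup_update_outside (k := k) x hl i (Or.inr (by omega)) v
        rw [htup (a + b), htup a, htup b]
        have pfi : i.val - (l - k) < N - (l - k) := by omega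
        rw [splice_update_ge x hl hkl i (by omega) (a + b) _ pfi,
          splice_update_ge x hl hkl i (by omega) a _ pfi,
          splice_update_ge x hl hkl i (by omega) b _ pfi]
        exact IH _ hn' _ hρ _ _ a b

lemma update_zero_of_add {m : ℕ} (f : (Fin m → A) → A)
    (hf : ∀ (x : Fin m → A) (i : Fin m) (a b : A),
      f (Function.update x i (a + b)) = f (Function.update x i a) + f (Function.update x i b))
    (x : Fin m → A) (i : Fin m) : f (Function.update x i 0) = 0 := by
  have h := hf x i 0 0
  rw [add_zero] at h
  exact (add_left_cancel (a := f (Function.update x i 0)) (by rw [add_zero]; exact h)).symm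

lemma update_sum_of_add {m : ℕ} (f : (Fin m → A) → A)
    (hf : ∀ (x : Fin m → A) (i : Fin m) (a b : A),
      f (Function.update x i (a + b)) = f (Function.update x i a) + f (Function.update x i b))
    {ι : Type} (t : Finset ι) (g : ι → A) (x : Fin m → A) (i : Fin m) :
    f (Function.update x i (∑ s ∈ t, g s)) = ∑ s ∈ t, f (Function.update x i (g s)) := by
  induction t using Finset.cons_induction with
  | empty => simpa using update_zero_of_add f hf x i
  | cons a t ha IHt => rw [Finset.sum_cons, hf, IHt, Finset.sum_cons]
end PhiAdd

section SumHelpers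
variable {M : Type} [AddCommMonoid M]

lemma double_if_filter {α β : Type} [Fintype α] [Fintype β] (P : α → Prop) (Q : β → Prop)
    [DecidablePred P] [DecidablePred Q] (v : α → β → M) :
    (∑ a : α, ∑ b : β, if P a ∧ Q b then v a b else 0) =
      ∑ p ∈ (Finset.univ.filter P) ×ˢ (Finset.univ.filter Q), v p.1 p.2 := by
  have h1 : ∀ a, (∑ b : β, if P a ∧ Q b then v a b else 0) =
      if P a then ∑ b ∈ Finset.univ.filter Q, v a b else 0 := by
    intro a
    by_cases h : P a
    · rw [if_pos h, Finset.sum_filter]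
      exact Finset.sum_congr rfl fun b _ => by simp [h]
    · rw [if_neg h]
      exact Finset.sum_eq_zero fun b _ => by simp [h]
  rw [Finset.sum_congr rfl (fun a _ => h1 a), ← Finset.sum_filter]
  exact (Finset.sum_product _ _ (fun p => v p.1 p.2)).symm

end SumHelpers

section KeyLemma
variable {A : Type} [Ring A] [Algebra ℂ A]

lemma key_lemma (B : Subalgebra ℂ A) (X : Submodule ℂ A)
    (hXr : ∀ b ∈ B, ∀ x ∈ X, x * b ∈ X)
    (phi kappa : ∀ n : ℕ, (Fin n → A) → A)
    (hkappaB : ∀ (n : ℕ) (x : Fin n → A), kappa n x ∈ B)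
    (hphiadd : ∀ (n : ℕ) (x : Fin n → A) (i : Fin n) (a b : A),
      phi n (Function.update x i (a + b)) =
        phi n (Function.update x i a) + phi n (Function.update x i b))
    (Phi Kappa : ∀ n : ℕ, (Fin n → Fin n → Bool) → (Fin n → A) → A)
    (hPhi : IsMultExt phi Phi) (hKappa : IsMultExt kappa Kappa) :
    ∀ N : ℕ,
    (∀ m : ℕ, 1 ≤ m → m < N → ∀ x : Fin m → A, (∀ i, x i ∈ X) →
      phi m x = ∑ r : Fin m → Fin m → Bool, if IsNCPart m r then Kappa m r x else 0) →
    ∀ τ : Fin N → Fin N → Bool, IsNCPart N τ → τ ≠ relTop N →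
    ∀ x : Fin N → A, (∀ i, x i ∈ X) →
    Phi N τ x = ∑ r : Fin N → Fin N → Bool,
      if IsNCPart N r ∧ relLe r τ then Kappa N r x else 0 := by
  intro N
  induction N using Nat.strong_induction_on with
  | _ N IH =>
  intro hyp1 τ hτ hne x hx
  have hN : 1 ≤ N := by
    by_contra h
    exact hne (by
      have : N = 0 := by omega
      subst this
      exact eq_relTop_of_dim0 τ)
  obtain ⟨k, l, hk, hIB⟩ := exists_intervalBlock_pos hτ hN hne
  have hkl := hIB.1
  have hl := hIB.2.1
  set n' := N - (l - k) with hn'def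
  have hρ : IsNCPart n' (relRestr τ k l) := isNCPart_relRestr hτ k l
  have hn'N : n' < N := by omega
  have hn'1 : 1 ≤ n' := by omega
  have pf : k - 1 < n' := by omega
  have pfN : k - 1 < N := by omega
  set tupx : Fin (l - k) → A := fun j => x ⟨k + j.val, by have := j.isLt; omega⟩ with htupxdef
  set w : A := x ⟨k - 1, pfN⟩ with hwdef
  set Z : Fin n' → A := splice x k l 0 with hZdef
  set p0 : Fin n' := ⟨k - 1, pf⟩ with hp0def
  have haddρ : ∀ (y : Fin n' → A) (p : Fin n') (a b : A),
      Phi n' (relRestr τ k l) (Function.update y p (a + b)) =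
        Phi n' (relRestr τ k l) (Function.update y p a) +
        Phi n' (relRestr τ k l) (Function.update y p b) :=
    fun y p a b => Phi_update_add phi Phi hPhi hphiadd n' (relRestr τ k l) hρ y p a b
  have e0 : ∀ c : A, splice x k l c = Function.update Z p0 (w * c) :=
    fun c => splice_c_update x hk hkl hl c 0 pf pfN
  have hYX : ∀ σ, IsNCPart (l - k) σ → ∀ q : Fin n', splice x k l (Kappa (l - k) σ tupx) q ∈ X := by
    intro σ hσ q
    have hq := q.isLt
    rcases Nat.lt_trichotomy (q.val + 1) k with h | h | h
    · rw [splice_apply_lt x k l _ q h]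
      exact hx _
    · rw [splice_apply_eq x k l _ q h]
      exact hXr _ (Kappa_mem B kappa Kappa hKappa hkappaB (l - k) σ hσ tupx) _ (hx _)
    · rw [splice_apply_ge x k l _ q (by omega)]
      exact hx _
  have hPhiy : ∀ σ, IsNCPart (l - k) σ →
      Phi n' (relRestr τ k l) (splice x k l (Kappa (l - k) σ tupx)) = ∑ r : Fin n' → Fin n' → Bool,
        if IsNCPart n' r ∧ relLe r (relRestr τ k l) then Kappa n' r (splice x k l (Kappa (l - k) σ tupx)) else 0 := by
    intro σ hσ
    by_cases hρtop : relRestr τ k l = relTop n'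
    · rw [hρtop, hPhi.1, hyp1 n' hn'1 hn'N (splice x k l (Kappa (l - k) σ tupx)) (hYX σ hσ)]
      refine Finset.sum_congr rfl fun r _ => ?_
      by_cases hr : IsNCPart n' r
      · rw [if_pos hr, if_pos ⟨hr, relLe_top r⟩]
      · rw [if_neg hr, if_neg (fun hc => hr hc.1)]
    · exact IH n' hn'N (fun m h1 h2 => hyp1 m h1 (by omega)) (relRestr τ k l) hρ hρtop
        (splice x k l (Kappa (l - k) σ tupx)) (hYX σ hσ)
  -- main calculation
  rw [hPhi.2 N τ hτ k l hk hIB x]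
  rw [show (phi (l - k) fun j => x ⟨k + j.val, by have := j.isLt; have := hIB.2.1; omega⟩) =
    phi (l - k) tupx from rfl]
  rw [hyp1 (l - k) (by omega) (by omega) tupx (fun j => hx _)]
  rw [e0 (∑ r : Fin (l - k) → Fin (l - k) → Bool,
    if IsNCPart (l - k) r then Kappa (l - k) r tupx else 0)]
  rw [Finset.mul_sum]
  rw [update_sum_of_add (Phi n' (relRestr τ k l)) haddρ Finset.univ _ Z p0]
  have hstep : ∀ σ : Fin (l - k) → Fin (l - k) → Bool,
      Phi n' (relRestr τ k l) (Function.update Z p0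
        (w * if IsNCPart (l - k) σ then Kappa (l - k) σ tupx else 0)) =
      ∑ r : Fin n' → Fin n' → Bool,
        if IsNCPart (l - k) σ ∧ (IsNCPart n' r ∧ relLe r (relRestr τ k l)) then
          Kappa n' r (splice x k l (Kappa (l - k) σ tupx)) else 0 := by
    intro σ
    by_cases hσ : IsNCPart (l - k) σ
    · rw [if_pos hσ, ← e0 (Kappa (l - k) σ tupx), hPhiy σ hσ]
      refine Finset.sum_congr rfl fun r _ => ?_
      by_cases hr : IsNCPart n' r ∧ relLe r (relRestr τ k l)
      · rw [if_pos hr, if_pos ⟨hσ, hr⟩]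
      · rw [if_neg hr, if_neg (fun hc => hr hc.2)]
    · rw [if_neg hσ, mul_zero, update_zero_of_add (Phi n' (relRestr τ k l)) haddρ Z p0]
      exact (Finset.sum_eq_zero fun r _ => by simp [hσ]).symm
  rw [Finset.sum_congr rfl fun σ _ => hstep σ]
  rw [double_if_filter (fun σ => IsNCPart (l - k) σ)
    (fun r => IsNCPart n' r ∧ relLe r (relRestr τ k l)) (fun σ r => Kappa n' r (splice x k l (Kappa (l - k) σ tupx)))]
  rw [show (∑ r : Fin N → Fin N → Bool,
      if IsNCPart N r ∧ relLe r τ then Kappa N r x else 0) =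
    ∑ r ∈ Finset.univ.filter (fun r => IsNCPart N r ∧ relLe r τ), Kappa N r x from
    (Finset.sum_filter _ _).symm]
  -- reindex by joining partitions
  refine Finset.sum_nbij' (i := fun p => joinRel k l hk hkl hl p.1 p.2)
    (j := fun r => (relInt k l hl r, relRestr r k l)) ?_ ?_ ?_ ?_ ?_
  · intro p hp
    simp only [Finset.mem_product, Finset.mem_filter, Finset.mem_univ, true_and] at hp
    simp only [Finset.mem_filter, Finset.mem_univ, true_and]
    exact ⟨isNCPart_joinRel hk hkl hl hp.1 hp.2.1,
      relLe_joinRel hk hkl hl hIB hp.2.2⟩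
  · intro r hr
    simp only [Finset.mem_filter, Finset.mem_univ, true_and] at hr
    simp only [Finset.mem_product, Finset.mem_filter, Finset.mem_univ, true_and]
    exact ⟨isNCPart_relInt hr.1 k l hl,
      isNCPart_relRestr hr.1 k l, relLe_relRestr hr.2 k l⟩
  · intro p hp
    simp only [Finset.mem_product, Finset.mem_filter, Finset.mem_univ, true_and] at hp
    exact Prod.ext (relInt_joinRel hk hkl hl p.1 p.2) (relRestr_joinRel hk hkl hl p.1 p.2)
  · intro r hr
    simp only [Finset.mem_filter, Finset.mem_univ, true_and] at hr
    exact joinRel_relInt_relRestr hk hkl hl hr.1.2.1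
      (fun i j h1 h2 hij => (hIB.2.2 i j h1 h2).mp (hr.2 i j hij))
  · intro p hp
    simp only [Finset.mem_product, Finset.mem_filter, Finset.mem_univ, true_and] at hp
    have hjoin : IsNCPart N (joinRel k l hk hkl hl p.1 p.2) :=
      isNCPart_joinRel hk hkl hl hp.1 hp.2.1
    have hclj : ∀ i j : Fin N, k ≤ i.val → i.val < l →
        joinRel k l hk hkl hl p.1 p.2 i j → k ≤ j.val ∧ j.val < l := by
      intro i j h1 h2 hij
      by_cases hj : k ≤ j.val ∧ j.val < l
      · exact hj
      · rw [joinRel_mixed hk hkl hl i j (by tauto)] at hij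
        exact absurd hij (by simp)
    have := Kappa_split kappa Kappa hKappa N (joinRel k l hk hkl hl p.1 p.2) hjoin
      k l hk hkl hl hclj x
    rw [this, relRestr_joinRel hk hkl hl p.1 p.2, relInt_joinRel hk hkl hl p.1 p.2]
end KeyLemma

section MuDual

lemma top_of_le_top {n : ℕ} {t : Fin n → Fin n → Bool} (h : relLe (relTop n) t) :
    t = relTop n := by
  funext i j
  have := h i j rfl
  simp [relTop, this]

lemma mu_dual (mu : ∀ n : ℕ, (Fin n → Fin n → Bool) → (Fin n → Fin n → Bool) → ℤ)
    (hmu : ∀ (n : ℕ) (r t : Fin n → Fin n → Bool),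
      IsNCPart n r → IsNCPart n t → relLe r t →
      (∑ s : Fin n → Fin n → Bool,
        if IsNCPart n s ∧ relLe r s ∧ relLe s t then mu n s t else 0) =
        (if r = t then 1 else 0))
    (n : ℕ) (r t : Fin n → Fin n → Bool)
    (hr : IsNCPart n r) (ht : IsNCPart n t) (hrt : relLe r t) :
    (∑ s : Fin n → Fin n → Bool,
      if IsNCPart n s ∧ relLe r s ∧ relLe s t then mu n r s else 0) =
      (if r = t then 1 else 0) := by
  classical
  have conv1 : ∀ (P : (Fin n → Fin n → Bool) → Prop) [DecidablePred P]
      (g : (Fin n → Fin n → Bool) → ℤ),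
      (∑ s : Fin n → Fin n → Bool, if IsNCPart n s ∧ P s then g s else 0) =
      ∑ s : {r : Fin n → Fin n → Bool // IsNCPart n r}, if P s.val then g s.val else 0 := by
    intro P _ g
    rw [← Finset.sum_subtype (Finset.univ.filter (fun s => IsNCPart n s)) (by simp)
      (fun s => if P s then g s else 0)]
    rw [Finset.sum_filter]
    refine Finset.sum_congr rfl fun s _ => ?_
    by_cases h1 : IsNCPart n s <;> by_cases h2 : P s <;> simp [h1, h2]
  set NCP := {r : Fin n → Fin n → Bool // IsNCPart n r}
  set Z : Matrix NCP NCP ℤ := Matrix.of fun a b => if relLe a.val b.val then 1 else 0 with hZ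
  set M : Matrix NCP NCP ℤ :=
    Matrix.of fun a b => if relLe a.val b.val then mu n a.val b.val else 0 with hM
  have hZM : Z * M = 1 := by
    ext a b
    rw [Matrix.mul_apply, Matrix.one_apply]
    have hterm : ∀ s : NCP, Z a s * M s b =
        if relLe a.val s.val ∧ relLe s.val b.val then mu n s.val b.val else 0 := by
      intro s
      rw [hZ, hM]
      by_cases h1 : relLe a.val s.val <;> by_cases h2 : relLe s.val b.val <;>
        simp [Matrix.of_apply, h1, h2]
    rw [Finset.sum_congr rfl fun s _ => hterm s]
    by_cases hab : relLe a.val b.val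
    · rw [← conv1 (fun s => relLe a.val s ∧ relLe s b.val) (fun s => mu n s b.val),
        hmu n a.val b.val a.2 b.2 hab]
      by_cases he : a = b
      · rw [if_pos (by rw [he]), if_pos he]
      · rw [if_neg (fun hc => he (Subtype.ext hc)), if_neg he]
    · rw [Finset.sum_eq_zero fun s _ => by
        by_cases h : relLe a.val s.val ∧ relLe s.val b.val
        · exact absurd (relLe_trans h.1 h.2) hab
        · simp [h]]
      rw [if_neg (fun hc => hab (by rw [hc]; exact relLe_refl b.val))]
  have hMZ : M * Z = 1 := mul_eq_one_comm.mp hZM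
  have := congrArg (fun Mat : Matrix NCP NCP ℤ => Mat ⟨r, hr⟩ ⟨t, ht⟩) hMZ
  try simp only at this
  rw [Matrix.mul_apply, Matrix.one_apply] at this
  have hterm : ∀ s : NCP, M ⟨r, hr⟩ s * Z s ⟨t, ht⟩ =
      if relLe r s.val ∧ relLe s.val t then mu n r s.val else 0 := by
    intro s
    rw [hZ, hM]
    by_cases h1 : relLe r s.val <;> by_cases h2 : relLe s.val t <;>
      simp [Matrix.of_apply, h1, h2]
  rw [Finset.sum_congr rfl fun s _ => hterm s] at this
  rw [← conv1 (fun s => relLe r s ∧ relLe s t) (fun s => mu n r s)] at this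
  rw [this]
  by_cases he : r = t
  · rw [if_pos (Subtype.ext he), if_pos he]
  · rw [if_neg (fun hc => he (by injection hc)), if_neg he]
end MuDual

section MoebiusInv
variable {A : Type} [Ring A] {n : ℕ}

lemma moebius_inv_A
    (c : (Fin n → Fin n → Bool) → (Fin n → Fin n → Bool) → ℤ)
    (hc : ∀ s t : Fin n → Fin n → Bool, IsNCPart n s → IsNCPart n t → relLe s t →
      (∑ r : Fin n → Fin n → Bool,
        if IsNCPart n r ∧ relLe s r ∧ relLe r t then c r t else 0) =
        (if s = t then 1 else 0))
    (F G : (Fin n → Fin n → Bool) → A) (t : Fin n → Fin n → Bool) (ht : IsNCPart n t)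
    (hFG : ∀ r, IsNCPart n r → relLe r t →
      F r = ∑ s : Fin n → Fin n → Bool, if IsNCPart n s ∧ relLe s r then G s else 0) :
    G t = ∑ r : Fin n → Fin n → Bool,
      if IsNCPart n r ∧ relLe r t then c r t • F r else 0 := by
  symm
  calc (∑ r : Fin n → Fin n → Bool, if IsNCPart n r ∧ relLe r t then c r t • F r else 0)
      = ∑ r : Fin n → Fin n → Bool, ∑ s : Fin n → Fin n → Bool,
          if (IsNCPart n r ∧ relLe r t) ∧ (IsNCPart n s ∧ relLe s r) then
            c r t • G s else 0 := by
        refine Finset.sum_congr rfl fun r _ => ?_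
        by_cases hr : IsNCPart n r ∧ relLe r t
        · rw [if_pos hr, hFG r hr.1 hr.2, Finset.smul_sum]
          refine Finset.sum_congr rfl fun s _ => ?_
          by_cases hs : IsNCPart n s ∧ relLe s r
          · rw [if_pos hs, if_pos ⟨hr, hs⟩]
          · rw [if_neg hs, if_neg (fun hcn => hs hcn.2), smul_zero]
        · rw [if_neg hr]
          exact (Finset.sum_eq_zero fun s _ => if_neg (fun hcn => hr hcn.1)).symm
    _ = ∑ s : Fin n → Fin n → Bool, ∑ r : Fin n → Fin n → Bool,
          if (IsNCPart n r ∧ relLe r t) ∧ (IsNCPart n s ∧ relLe s r) then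
            c r t • G s else 0 := Finset.sum_comm
    _ = ∑ s : Fin n → Fin n → Bool,
          if IsNCPart n s then
            (∑ r : Fin n → Fin n → Bool,
              if IsNCPart n r ∧ relLe s r ∧ relLe r t then c r t else 0) • G s
          else 0 := by
        refine Finset.sum_congr rfl fun s _ => ?_
        by_cases hs : IsNCPart n s
        · rw [if_pos hs, Finset.sum_smul]
          refine Finset.sum_congr rfl fun r _ => ?_
          by_cases hP : IsNCPart n r ∧ relLe s r ∧ relLe r t
          · rw [if_pos ⟨⟨hP.1, hP.2.2⟩, hs, hP.2.1⟩, if_pos hP]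
          · rw [if_neg (fun hcn => hP ⟨hcn.1.1, hcn.2.2, hcn.1.2⟩), if_neg hP, zero_smul]
        · rw [if_neg hs]
          exact Finset.sum_eq_zero fun r _ => if_neg (fun hcn => hs hcn.2.1)
    _ = ∑ s : Fin n → Fin n → Bool, if s = t then G s else 0 := by
        refine Finset.sum_congr rfl fun s _ => ?_
        by_cases hs : IsNCPart n s
        · rw [if_pos hs]
          by_cases hst : relLe s t
          · rw [hc s t hs ht hst]
            by_cases he : s = t
            · rw [if_pos he, if_pos he, one_smul]
            · rw [if_neg he, if_neg he, zero_smul]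
          · rw [Finset.sum_eq_zero fun r _ => by
                by_cases h : IsNCPart n r ∧ relLe s r ∧ relLe r t
                · exact absurd (relLe_trans h.2.1 h.2.2) hst
                · exact if_neg h,
              zero_smul, if_neg (fun he => hst (by rw [he]; exact relLe_refl t))]
        · rw [if_neg hs, if_neg (fun he => hs (by rw [he]; exact ht))]
    _ = G t := by rw [Finset.sum_ite_eq' Finset.univ t G, if_pos (Finset.mem_univ t)]

lemma moebius_inv_B
    (c : (Fin n → Fin n → Bool) → (Fin n → Fin n → Bool) → ℤ)
    (hc : ∀ s t : Fin n → Fin n → Bool, IsNCPart n s → IsNCPart n t → relLe s t →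
      (∑ r : Fin n → Fin n → Bool,
        if IsNCPart n r ∧ relLe s r ∧ relLe r t then c s r else 0) =
        (if s = t then 1 else 0))
    (F G : (Fin n → Fin n → Bool) → A) (t : Fin n → Fin n → Bool) (ht : IsNCPart n t)
    (hGF : ∀ r, IsNCPart n r → relLe r t →
      G r = ∑ s : Fin n → Fin n → Bool, if IsNCPart n s ∧ relLe s r then c s r • F s else 0) :
    (∑ r : Fin n → Fin n → Bool, if IsNCPart n r ∧ relLe r t then G r else 0) = F t := by
  calc (∑ r : Fin n → Fin n → Bool, if IsNCPart n r ∧ relLe r t then G r else 0)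
      = ∑ r : Fin n → Fin n → Bool, ∑ s : Fin n → Fin n → Bool,
          if (IsNCPart n r ∧ relLe r t) ∧ (IsNCPart n s ∧ relLe s r) then
            c s r • F s else 0 := by
        refine Finset.sum_congr rfl fun r _ => ?_
        by_cases hr : IsNCPart n r ∧ relLe r t
        · rw [if_pos hr, hGF r hr.1 hr.2]
          refine Finset.sum_congr rfl fun s _ => ?_
          by_cases hs : IsNCPart n s ∧ relLe s r
          · rw [if_pos hs, if_pos ⟨hr, hs⟩]
          · rw [if_neg hs, if_neg (fun hcn => hs hcn.2)]
        · rw [if_neg hr]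
          exact (Finset.sum_eq_zero fun s _ => if_neg (fun hcn => hr hcn.1)).symm
    _ = ∑ s : Fin n → Fin n → Bool, ∑ r : Fin n → Fin n → Bool,
          if (IsNCPart n r ∧ relLe r t) ∧ (IsNCPart n s ∧ relLe s r) then
            c s r • F s else 0 := Finset.sum_comm
    _ = ∑ s : Fin n → Fin n → Bool,
          if IsNCPart n s then
            (∑ r : Fin n → Fin n → Bool,
              if IsNCPart n r ∧ relLe s r ∧ relLe r t then c s r else 0) • F s
          else 0 := by
        refine Finset.sum_congr rfl fun s _ => ?_
        by_cases hs : IsNCPart n s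
        · rw [if_pos hs, Finset.sum_smul]
          refine Finset.sum_congr rfl fun r _ => ?_
          by_cases hP : IsNCPart n r ∧ relLe s r ∧ relLe r t
          · rw [if_pos ⟨⟨hP.1, hP.2.2⟩, hs, hP.2.1⟩, if_pos hP]
          · rw [if_neg (fun hcn => hP ⟨hcn.1.1, hcn.2.2, hcn.1.2⟩), if_neg hP, zero_smul]
        · rw [if_neg hs]
          exact Finset.sum_eq_zero fun r _ => if_neg (fun hcn => hs hcn.2.1)
    _ = ∑ s : Fin n → Fin n → Bool, if s = t then F s else 0 := by
        refine Finset.sum_congr rfl fun s _ => ?_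
        by_cases hs : IsNCPart n s
        · rw [if_pos hs]
          by_cases hst : relLe s t
          · rw [hc s t hs ht hst]
            by_cases he : s = t
            · rw [if_pos he, if_pos he, one_smul]
            · rw [if_neg he, if_neg he, zero_smul]
          · rw [Finset.sum_eq_zero fun r _ => by
                by_cases h : IsNCPart n r ∧ relLe s r ∧ relLe r t
                · exact absurd (relLe_trans h.2.1 h.2.2) hst
                · exact if_neg h,
              zero_smul, if_neg (fun he => hst (by rw [he]; exact relLe_refl t))]
        · rw [if_neg hs, if_neg (fun he => hs (by rw [he]; exact ht))]
    _ = F t := by rw [Finset.sum_ite_eq' Finset.univ t F, if_pos (Finset.mem_univ t)]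
end MoebiusInv

/-- (Möbius inversion for operator-valued cumulants.)  Let `B ⊆ A` be a
unital inclusion of unital complex algebras, `X` a `B`-`B`-subbimodule of `A`, and
`{φₙ}`, `{κₙ}` two families of `B`-valued `B`-`B`-bimodule maps on tuples from `X`, with
multiplicative extensions `{Φ_π}`, `{K_π}` over the lattice `NC(n)` of noncrossing
partitions, and let `μ` be the Möbius function of that lattice.  Then the conditions
(1) `φₙ = ∑_{π} K_π`, (2) `κₙ = ∑_π μ(π,1ₙ) Φ_π`, (3) `Φ_τ = ∑_{π ≤ τ} K_π`,
(4) `K_τ = ∑_{π ≤ τ} μ(π,τ) Φ_π` are all equivalent. -/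
theorem moebius_inversion_for_multiplicative_extensions
    {A : Type} [Ring A] [Algebra ℂ A] (B : Subalgebra ℂ A)
    (X : Submodule ℂ A)
    (hXl : ∀ b ∈ B, ∀ x ∈ X, b * x ∈ X) (hXr : ∀ b ∈ B, ∀ x ∈ X, x * b ∈ X)
    (phi kappa : ∀ n : ℕ, (Fin n → A) → A)
    (hphiB : ∀ (n : ℕ) (x : Fin n → A), phi n x ∈ B)
    (hkappaB : ∀ (n : ℕ) (x : Fin n → A), kappa n x ∈ B)
    (hphi : ∀ n : ℕ, IsBimodMap B (phi n)) (hkappa : ∀ n : ℕ, IsBimodMap B (kappa n))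
    (Phi Kappa : ∀ n : ℕ, (Fin n → Fin n → Bool) → (Fin n → A) → A)
    (hPhi : IsMultExt phi Phi) (hKappa : IsMultExt kappa Kappa)
    (mu : ∀ n : ℕ, (Fin n → Fin n → Bool) → (Fin n → Fin n → Bool) → ℤ)
    (hmu : ∀ (n : ℕ) (r t : Fin n → Fin n → Bool),
      IsNCPart n r → IsNCPart n t → relLe r t →
      (∑ s : Fin n → Fin n → Bool,
        if IsNCPart n s ∧ relLe r s ∧ relLe s t then mu n s t else 0) =
        (if r = t then 1 else 0)) :
    -- (1) ↔ (2), (1) ↔ (3), (1) ↔ (4)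
    ((∀ (n : ℕ), 1 ≤ n → ∀ x : Fin n → A, (∀ i, x i ∈ X) →
        phi n x = ∑ r : Fin n → Fin n → Bool,
          if IsNCPart n r then Kappa n r x else 0) ↔
      (∀ (n : ℕ), 1 ≤ n → ∀ x : Fin n → A, (∀ i, x i ∈ X) →
        kappa n x = ∑ r : Fin n → Fin n → Bool,
          if IsNCPart n r then mu n r (relTop n) • Phi n r x else 0)) ∧
    ((∀ (n : ℕ), 1 ≤ n → ∀ x : Fin n → A, (∀ i, x i ∈ X) →
        phi n x = ∑ r : Fin n → Fin n → Bool,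
          if IsNCPart n r then Kappa n r x else 0) ↔
      (∀ (n : ℕ), 1 ≤ n → ∀ t : Fin n → Fin n → Bool, IsNCPart n t →
        ∀ x : Fin n → A, (∀ i, x i ∈ X) →
        Phi n t x = ∑ r : Fin n → Fin n → Bool,
          if IsNCPart n r ∧ relLe r t then Kappa n r x else 0)) ∧
    ((∀ (n : ℕ), 1 ≤ n → ∀ x : Fin n → A, (∀ i, x i ∈ X) →
        phi n x = ∑ r : Fin n → Fin n → Bool,
          if IsNCPart n r then Kappa n r x else 0) ↔
      (∀ (n : ℕ), 1 ≤ n → ∀ t : Fin n → Fin n → Bool, IsNCPart n t →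
        ∀ x : Fin n → A, (∀ i, x i ∈ X) →
        Kappa n t x = ∑ r : Fin n → Fin n → Bool,
          if IsNCPart n r ∧ relLe r t then mu n r t • Phi n r x else 0)) := by
  -- (1) → (3)
  have h13 : (∀ (n : ℕ), 1 ≤ n → ∀ x : Fin n → A, (∀ i, x i ∈ X) →
        phi n x = ∑ r : Fin n → Fin n → Bool,
          if IsNCPart n r then Kappa n r x else 0) →
      (∀ (n : ℕ), 1 ≤ n → ∀ t : Fin n → Fin n → Bool, IsNCPart n t →
        ∀ x : Fin n → A, (∀ i, x i ∈ X) →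
        Phi n t x = ∑ r : Fin n → Fin n → Bool,
          if IsNCPart n r ∧ relLe r t then Kappa n r x else 0) := by
    intro h1 n hn t ht x hx
    by_cases htop : t = relTop n
    · subst htop
      rw [hPhi.1, h1 n hn x hx]
      refine Finset.sum_congr rfl fun r _ => ?_
      by_cases hr : IsNCPart n r
      · rw [if_pos hr, if_pos ⟨hr, relLe_top r⟩]
      · rw [if_neg hr, if_neg (fun hc => hr hc.1)]
    · exact key_lemma B X hXr phi kappa hkappaB (fun m => (hphi m).1) Phi Kappa hPhi hKappa
        n (fun m h1' h2' => h1 m h1') t ht htop x hx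
  -- (3) → (1)
  have h31 : (∀ (n : ℕ), 1 ≤ n → ∀ t : Fin n → Fin n → Bool, IsNCPart n t →
        ∀ x : Fin n → A, (∀ i, x i ∈ X) →
        Phi n t x = ∑ r : Fin n → Fin n → Bool,
          if IsNCPart n r ∧ relLe r t then Kappa n r x else 0) →
      (∀ (n : ℕ), 1 ≤ n → ∀ x : Fin n → A, (∀ i, x i ∈ X) →
        phi n x = ∑ r : Fin n → Fin n → Bool,
          if IsNCPart n r then Kappa n r x else 0) := by
    intro h3 n hn x hx
    have := h3 n hn (relTop n) isNCPart_relTop x hx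
    rw [hPhi.1] at this
    rw [this]
    refine Finset.sum_congr rfl fun r _ => ?_
    by_cases hr : IsNCPart n r
    · rw [if_pos ⟨hr, relLe_top r⟩, if_pos hr]
    · rw [if_neg (fun hc => hr hc.1), if_neg hr]
  -- (3) → (4)
  have h34 : (∀ (n : ℕ), 1 ≤ n → ∀ t : Fin n → Fin n → Bool, IsNCPart n t →
        ∀ x : Fin n → A, (∀ i, x i ∈ X) →
        Phi n t x = ∑ r : Fin n → Fin n → Bool,
          if IsNCPart n r ∧ relLe r t then Kappa n r x else 0) →
      (∀ (n : ℕ), 1 ≤ n → ∀ t : Fin n → Fin n → Bool, IsNCPart n t →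
        ∀ x : Fin n → A, (∀ i, x i ∈ X) →
        Kappa n t x = ∑ r : Fin n → Fin n → Bool,
          if IsNCPart n r ∧ relLe r t then mu n r t • Phi n r x else 0) := by
    intro h3 n hn t ht x hx
    exact moebius_inv_A (mu n) (fun s t' hs ht' hst => hmu n s t' hs ht' hst)
      (fun r => Phi n r x) (fun r => Kappa n r x) t ht
      (fun r hr _ => h3 n hn r hr x hx)
  -- (4) → (3)
  have h43 : (∀ (n : ℕ), 1 ≤ n → ∀ t : Fin n → Fin n → Bool, IsNCPart n t →
        ∀ x : Fin n → A, (∀ i, x i ∈ X) →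
        Kappa n t x = ∑ r : Fin n → Fin n → Bool,
          if IsNCPart n r ∧ relLe r t then mu n r t • Phi n r x else 0) →
      (∀ (n : ℕ), 1 ≤ n → ∀ t : Fin n → Fin n → Bool, IsNCPart n t →
        ∀ x : Fin n → A, (∀ i, x i ∈ X) →
        Phi n t x = ∑ r : Fin n → Fin n → Bool,
          if IsNCPart n r ∧ relLe r t then Kappa n r x else 0) := by
    intro h4 n hn t ht x hx
    exact (moebius_inv_B (mu n) (fun s t' hs ht' hst => mu_dual mu hmu n s t' hs ht' hst)
      (fun r => Phi n r x) (fun r => Kappa n r x) t ht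
      (fun r hr _ => h4 n hn r hr x hx)).symm
  -- (4) → (2)
  have h42 : (∀ (n : ℕ), 1 ≤ n → ∀ t : Fin n → Fin n → Bool, IsNCPart n t →
        ∀ x : Fin n → A, (∀ i, x i ∈ X) →
        Kappa n t x = ∑ r : Fin n → Fin n → Bool,
          if IsNCPart n r ∧ relLe r t then mu n r t • Phi n r x else 0) →
      (∀ (n : ℕ), 1 ≤ n → ∀ x : Fin n → A, (∀ i, x i ∈ X) →
        kappa n x = ∑ r : Fin n → Fin n → Bool,
          if IsNCPart n r then mu n r (relTop n) • Phi n r x else 0) := by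
    intro h4 n hn x hx
    have := h4 n hn (relTop n) isNCPart_relTop x hx
    rw [hKappa.1] at this
    rw [this]
    refine Finset.sum_congr rfl fun r _ => ?_
    by_cases hr : IsNCPart n r
    · rw [if_pos ⟨hr, relLe_top r⟩, if_pos hr]
    · rw [if_neg (fun hc => hr hc.1), if_neg hr]
  -- (2) → (1)
  have h21 : (∀ (n : ℕ), 1 ≤ n → ∀ x : Fin n → A, (∀ i, x i ∈ X) →
        kappa n x = ∑ r : Fin n → Fin n → Bool,
          if IsNCPart n r then mu n r (relTop n) • Phi n r x else 0) →
      (∀ (n : ℕ), 1 ≤ n → ∀ x : Fin n → A, (∀ i, x i ∈ X) →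
        phi n x = ∑ r : Fin n → Fin n → Bool,
          if IsNCPart n r then Kappa n r x else 0) := by
    intro h2 n
    induction n using Nat.strong_induction_on with
    | _ n IH =>
    intro hn x hx
    -- (3) for non-top partitions at level n
    have h3nt : ∀ t : Fin n → Fin n → Bool, IsNCPart n t → t ≠ relTop n →
        ∀ y : Fin n → A, (∀ i, y i ∈ X) →
        Phi n t y = ∑ r : Fin n → Fin n → Bool,
          if IsNCPart n r ∧ relLe r t then Kappa n r y else 0 :=
      fun t ht hne y hy => key_lemma B X hXr phi kappa hkappaB (fun m => (hphi m).1)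
        Phi Kappa hPhi hKappa n (fun m h1' h2' => IH m h2' h1') t ht hne y hy
    -- (4) restricted to r ≤ top, with the top case supplied by (2)
    have h4top : ∀ r : Fin n → Fin n → Bool, IsNCPart n r → relLe r (relTop n) →
        Kappa n r x = ∑ s : Fin n → Fin n → Bool,
          if IsNCPart n s ∧ relLe s r then mu n s r • Phi n s x else 0 := by
      intro r hr _
      by_cases hrtop : r = relTop n
      · subst hrtop
        rw [hKappa.1, h2 n hn x hx]
        refine Finset.sum_congr rfl fun s _ => ?_
        by_cases hs : IsNCPart n s
        · rw [if_pos hs, if_pos ⟨hs, relLe_top s⟩]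
        · rw [if_neg hs, if_neg (fun hc => hs hc.1)]
      · refine moebius_inv_A (mu n) (fun s t' hs ht' hst => hmu n s t' hs ht' hst)
          (fun s => Phi n s x) (fun s => Kappa n s x) r hr ?_
        intro s hs hsr
        have hsne : s ≠ relTop n := by
          intro hc
          subst hc
          exact hrtop (top_of_le_top hsr)
        exact h3nt s hs hsne x hx
    have hfin := moebius_inv_B (mu n) (fun s t' hs ht' hst => mu_dual mu hmu n s t' hs ht' hst)
      (fun r => Phi n r x) (fun r => Kappa n r x) (relTop n) isNCPart_relTop h4top
    rw [← hPhi.1 n x]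
    refine Eq.trans hfin.symm ?_
    refine Finset.sum_congr rfl fun r _ => ?_
    by_cases hr : IsNCPart n r
    · rw [if_pos ⟨hr, relLe_top r⟩, if_pos hr]
    · rw [if_neg (fun hc => hr hc.1), if_neg hr]
  exact ⟨⟨fun h1 => h42 (h34 (h13 h1)), h21⟩, ⟨h13, h31⟩,
    ⟨fun h1 => h34 (h13 h1), fun h4 => h31 (h43 h4)⟩⟩
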